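/- Let G be an n×n positive definite real matrix, j ∉ S ⊆ [n], v ∈ ℝ^n, and suppose v_j = G_{j,S} G_{S,S}^{-1} v_S. Define ṽ_S = v_S - (v_j/G_{j,j}) G_{S,j}. Then (G_{S,S} - (1/G_{j,j}) G_{S,j} G_{j,S})^{-1} ṽ_S = G_{S,S}^{-1} v_S. -/

import Mathlib

open Matrix

/-- On the locus `v_j = G_{j,S} G_{S,S}⁻¹ v_S`, the updated inverse applied to
`ṽ_S = v_S - (v_j/G_{j,j}) G_{S,j}` agrees with `G_{S,S}⁻¹ v_S`. -/
theorem stmt_4 {n : ℕ} (G : Matrix (Fin n) (Fin n) ℝ) (hG : G.PosDef)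
    (j : Fin n) (S : Finset (Fin n)) (hj : j ∉ S) (v : Fin n → ℝ)
    (hv : v j = ∑ i : S, G j i.1 *
      (G.submatrix (Subtype.val : S → Fin n) Subtype.val)⁻¹.mulVec (fun i' : {x // x ∈ S} => v i'.1) i) :
    letI A : Matrix S S ℝ := G.submatrix Subtype.val Subtype.val
    letI vS : S → ℝ := fun i => v i.1
    letI vtil : S → ℝ := fun i => v i.1 - (v j / G j j) * G i.1 j
    (A - (G j j)⁻¹ • (Matrix.of fun a b : S => G a.1 j * G j b.1))⁻¹.mulVec vtil
      = A⁻¹.mulVec vS := by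
  set A : Matrix S S ℝ := G.submatrix (Subtype.val : S → Fin n) Subtype.val with hA
  set vS : S → ℝ := fun i => v i.1 with hvS
  set vtil : S → ℝ := fun i => v i.1 - v j / G j j * G i.1 j with hvtil
  have hg : 0 < G j j := by
    have := hG.dotProduct_mulVec_pos (x := Pi.single j 1) (by
      intro h
      have := congrFun h j
      simp at this)
    simpa [Matrix.mulVec, dotProduct, Pi.single_apply] using this
  set g := G j j with hgdef
  have hs : ∀ a b : Fin n, G a b = G b a := by
    intro a b
    have h := congrFun (congrFun hG.isHermitian a) b
    simpa using h.symm
  set B : Matrix S S ℝ := A - g⁻¹ • (Matrix.of fun a b : S => G a.1 j * G j b.1) with hB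
  -- key sum computation for extended vectors
  have key : ∀ (x : S → ℝ) (t : ℝ),
      (fun i => if h : i ∈ S then x ⟨i, h⟩ else if i = j then t else 0) ⬝ᵥ
        G.mulVec (fun i => if h : i ∈ S then x ⟨i, h⟩ else if i = j then t else 0)
      = (∑ i : S, x i * ∑ k : S, G i.1 k.1 * x k)
        + t * (∑ i : S, x i * G i.1 j) + t * (∑ k : S, G j k.1 * x k) + g * t ^ 2 := by
    intro x t
    set y : Fin n → ℝ := fun i => if h : i ∈ S then x ⟨i, h⟩ else if i = j then t else 0 with hy
    have hsum : ∀ f : Fin n → ℝ, (∑ k, f k * y k) = (∑ k : S, f k.1 * x k) + f j * t := by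
      intro f
      rw [← Finset.sum_subset (Finset.subset_univ (insert j S))]
      · rw [Finset.sum_insert hj]
        have hyj : y j = t := by simp [hy, hj]
        rw [hyj, ← Finset.sum_attach S (fun k => f k * y k)]
        have heach : ∀ k : S, f k.1 * y k.1 = f k.1 * x k := by
          intro k; simp [hy, k.2]
        rw [Finset.sum_congr rfl (fun k _ => heach k), Finset.univ_eq_attach]
        ring
      · intro k _ hk
        simp only [Finset.mem_insert, not_or] at hk
        simp [hy, hk.1, hk.2]
    have houter : y ⬝ᵥ G.mulVec y = ∑ i, (G.mulVec y) i * y i := by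
      simp [dotProduct, mul_comm]
    rw [houter, hsum (G.mulVec y)]
    have hinner : ∀ i, (G.mulVec y) i = (∑ k : S, G i k.1 * x k) + G i j * t := by
      intro i
      have : (G.mulVec y) i = ∑ k, G i k * y k := by
        simp [Matrix.mulVec, dotProduct]
      rw [this, hsum (G i)]
    rw [Finset.sum_congr rfl (fun i _ => by rw [hinner i.1]), hinner j]
    have expand : (∑ i : S, ((∑ k : S, G i.1 k.1 * x k) + G i.1 j * t) * x i)
        = (∑ i : S, x i * ∑ k : S, G i.1 k.1 * x k) + t * (∑ i : S, x i * G i.1 j) := by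
      rw [Finset.mul_sum, ← Finset.sum_add_distrib]
      apply Finset.sum_congr rfl; intro i _; ring
    rw [expand]; ring
  -- nonvanishing of the extension
  have hne : ∀ (x : S → ℝ), x ≠ 0 → ∀ t : ℝ,
      (fun i => if h : i ∈ S then x ⟨i, h⟩ else if i = j then t else 0) ≠ (0 : Fin n → ℝ) := by
    intro x hx t
    obtain ⟨i, hi⟩ := Function.ne_iff.mp hx
    rw [Function.ne_iff]
    refine ⟨i.1, ?_⟩
    simpa [i.2] using hi
  -- quadratic form of A
  have hxA : ∀ (x : S → ℝ), x ⬝ᵥ A.mulVec x = ∑ i : S, x i * ∑ k : S, G i.1 k.1 * x k := by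
    intro x
    simp [dotProduct, Matrix.mulVec, hA, Matrix.submatrix_apply, Finset.univ_eq_attach]
  -- quadratic form of B
  have hxB : ∀ (x : S → ℝ), x ⬝ᵥ B.mulVec x
      = (∑ i : S, x i * ∑ k : S, G i.1 k.1 * x k)
        - g⁻¹ * (∑ i : S, x i * G i.1 j) * (∑ k : S, G j k.1 * x k) := by
    intro x
    have h0 : x ⬝ᵥ B.mulVec x = ∑ i : S, ∑ k : S,
        (x i * (G i.1 k.1 * x k) - g⁻¹ * (x i * G i.1 j) * (G j k.1 * x k)) := by
      simp only [dotProduct, Matrix.mulVec, hB, Matrix.sub_apply, Matrix.smul_apply,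
        Matrix.of_apply, hA, Matrix.submatrix_apply, smul_eq_mul]
      apply Finset.sum_congr rfl; intro i _
      rw [Finset.mul_sum]
      apply Finset.sum_congr rfl; intro k _; ring
    rw [h0]
    have h1 : ∀ i : S, (∑ k : S,
        (x i * (G i.1 k.1 * x k) - g⁻¹ * (x i * G i.1 j) * (G j k.1 * x k)))
        = x i * (∑ k : S, G i.1 k.1 * x k)
          - (x i * G i.1 j) * (g⁻¹ * (∑ k : S, G j k.1 * x k)) := by
      intro i
      rw [Finset.sum_sub_distrib]
      congr 1
      · rw [Finset.mul_sum]
      · rw [Finset.mul_sum, Finset.mul_sum]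
        apply Finset.sum_congr rfl; intro k _; ring
    rw [Finset.sum_congr rfl (fun i _ => h1 i), Finset.sum_sub_distrib]
    congr 1
    rw [← Finset.sum_mul]
    ring
  -- A is positive definite
  have hApd : A.PosDef := by
    refine Matrix.PosDef.of_dotProduct_mulVec_pos ?_ ?_
    · rw [Matrix.IsHermitian]
      ext a b
      simp only [Matrix.conjTranspose_apply, hA, Matrix.submatrix_apply, star_trivial]
      exact hs b.1 a.1
    · intro x hx
      have h1 := hG.dotProduct_mulVec_pos (hne x hx 0)
      rw [show (star (fun i => if h : i ∈ S then x ⟨i, h⟩ else if i = j then (0:ℝ) else 0))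
          = (fun i => if h : i ∈ S then x ⟨i, h⟩ else if i = j then (0:ℝ) else 0) from by
          funext i; simp] at h1
      rw [key x 0] at h1
      rw [show star x = x from by funext i; simp, hxA x]
      linarith [h1]
  -- B is positive definite
  have hBpd : B.PosDef := by
    refine Matrix.PosDef.of_dotProduct_mulVec_pos ?_ ?_
    · rw [Matrix.IsHermitian]
      ext a b
      simp only [hB, hA, Matrix.conjTranspose_apply, Matrix.sub_apply, Matrix.smul_apply,
        Matrix.of_apply, Matrix.submatrix_apply, star_trivial, smul_eq_mul]
      rw [hs b.1 a.1, hs b.1 j, hs j a.1]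
      ring
    · intro x hx
      set r : ℝ := ∑ k : S, G j k.1 * x k with hr
      have h1 := hG.dotProduct_mulVec_pos (hne x hx (-(r / g)))
      rw [show (star (fun i => if h : i ∈ S then x ⟨i, h⟩ else if i = j then (-(r/g)) else 0))
          = (fun i => if h : i ∈ S then x ⟨i, h⟩ else if i = j then (-(r/g)) else 0) from by
          funext i; simp] at h1
      rw [key x (-(r/g))] at h1
      rw [show star x = x from by funext i; simp, hxB x, ← hr]
      have hgne : g ≠ 0 := ne_of_gt hg
      have heq : (∑ i : S, x i * ∑ k : S, G i.1 k.1 * x k)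
          + (-(r/g)) * (∑ i : S, x i * G i.1 j) + (-(r/g)) * r + g * (-(r/g)) ^ 2
          = (∑ i : S, x i * ∑ k : S, G i.1 k.1 * x k)
            - g⁻¹ * (∑ i : S, x i * G i.1 j) * r := by
        field_simp
        ring
      rw [heq] at h1
      exact h1
  have hAdet : IsUnit A.det := hApd.det_pos.ne'.isUnit
  have hBdet : IsUnit B.det := hBpd.det_pos.ne'.isUnit
  set w : S → ℝ := A⁻¹.mulVec vS with hw
  have hAw : A.mulVec w = vS := by
    rw [hw, Matrix.mulVec_mulVec, Matrix.mul_nonsing_inv _ hAdet, Matrix.one_mulVec]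
  have hvj : v j = ∑ k : S, G j k.1 * w k := hv
  have hBw : B.mulVec w = vtil := by
    funext i
    have h1 : (B.mulVec w) i = (A.mulVec w) i - g⁻¹ * G i.1 j * (∑ k : S, G j k.1 * w k) := by
      simp only [Matrix.mulVec, dotProduct, hB, Matrix.sub_apply, Matrix.smul_apply,
        Matrix.of_apply, smul_eq_mul, sub_mul]
      rw [Finset.sum_sub_distrib]
      congr 1
      rw [Finset.mul_sum]
      apply Finset.sum_congr rfl; intro k _; ring
    rw [h1, hAw, ← hvj]
    show vS i - g⁻¹ * G i.1 j * v j = v i.1 - (v j / g) * G i.1 j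
    show v i.1 - g⁻¹ * G i.1 j * v j = v i.1 - (v j / g) * G i.1 j
    rw [div_eq_mul_inv]
    ring
  rw [← hBw, Matrix.mulVec_mulVec, Matrix.nonsing_inv_mul _ hBdet, Matrix.one_mulVec]
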